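/- Let n ≥ 4, A ∈ PSC_n^{0,1}, h = min{i ∈ [1,n−1] : a_{n,i} > 0}, V₁^h = {i ∈ [h+1,n−1] : a_{n,i}=0}, and t = max{h−1, ⌊(m(V₁^h)+1)/2⌋} where m denotes the longest run of consecutive integers. Then exp(A) = 2(t+1). -/

import Mathlib

def IsPrimitive {n : ℕ} (A : Matrix (Fin n) (Fin n) ℝ) : Prop :=
  (∀ i j, 0 ≤ A i j) ∧ ∃ k : ℕ, 0 < k ∧ ∀ i j, 0 < (A ^ k) i j

def ExpIs {n : ℕ} (A : Matrix (Fin n) (Fin n) ℝ) (e : ℕ) : Prop :=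
  IsLeast {k : ℕ | 0 < k ∧ ∀ i j, 0 < (A ^ k) i j} e

/-- A `(0,1)` companion matrix: superdiagonal entries `1` and all other entries
`0` in the first `n-1` rows; last-row entries in `{0,1}`. -/
def IsCompanion {n : ℕ} (C : Matrix (Fin n) (Fin n) ℝ) : Prop :=
  ∀ i j : Fin n,
    if (i : ℕ) + 1 < n then (C i j = if (j : ℕ) = (i : ℕ) + 1 then 1 else 0)
    else (C i j = 0 ∨ C i j = 1)

/-- The set `C_n^{α,ε}` of symmetric companion matrices `C + Cᵀ` with
`c_{n,1} = α` and `c_{n,n} = ε`. -/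
def companionClass (n : ℕ) (hn : 0 < n) (α ε : ℝ) :
    Set (Matrix (Fin n) (Fin n) ℝ) :=
  {A | ∃ C : Matrix (Fin n) (Fin n) ℝ, IsCompanion C ∧
    C ⟨n - 1, by omega⟩ ⟨0, hn⟩ = α ∧ C ⟨n - 1, by omega⟩ ⟨n - 1, by omega⟩ = ε ∧
    A = C + C.transpose}

/-- `mRun S` : the maximum length of a run of consecutive integers contained in
`S` (`0` for the empty set). -/
noncomputable def mRun (S : Set ℕ) : ℕ := sSup {L : ℕ | ∃ a : ℕ, ∀ t, t < L → a + t ∈ S}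

/-- The exponent set of a family of matrices. -/
def expSet {n : ℕ} (X : Set (Matrix (Fin n) (Fin n) ℝ)) : Set ℕ :=
  {e | ∃ A ∈ X, IsPrimitive A ∧ ExpIs A e}

lemma pow_entry_nonneg {n : ℕ} (A : Matrix (Fin n) (Fin n) ℝ)
    (h : ∀ i j, 0 ≤ A i j) : ∀ k i j, 0 ≤ (A ^ k) i j := by
  intro k
  induction k with
  | zero => intro i j; rw [pow_zero, Matrix.one_apply]; split <;> norm_num
  | succ k ih =>
    intro i j
    rw [pow_succ, Matrix.mul_apply]
    exact Finset.sum_nonneg fun w _ => mul_nonneg (ih i w) (h w j)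

lemma pow_pos_step {n : ℕ} (A : Matrix (Fin n) (Fin n) ℝ)
    (h : ∀ i j, 0 ≤ A i j) {k : ℕ} {i w j : Fin n}
    (h1 : 0 < (A ^ k) i w) (h2 : 0 < A w j) : 0 < (A ^ (k+1)) i j := by
  rw [pow_succ, Matrix.mul_apply]
  exact Finset.sum_pos' (fun l _ => mul_nonneg (pow_entry_nonneg A h k i l) (h l j))
    ⟨w, Finset.mem_univ w, mul_pos h1 h2⟩

lemma pow_pos_step' {n : ℕ} (A : Matrix (Fin n) (Fin n) ℝ)
    (h : ∀ i j, 0 ≤ A i j) {k : ℕ} {i w j : Fin n}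
    (h1 : 0 < A i w) (h2 : 0 < (A ^ k) w j) : 0 < (A ^ (k+1)) i j := by
  rw [pow_succ', Matrix.mul_apply]
  exact Finset.sum_pos' (fun l _ => mul_nonneg (h i l) (pow_entry_nonneg A h k l j))
    ⟨w, Finset.mem_univ w, mul_pos h1 h2⟩

lemma pow_pos_extract {n : ℕ} (A : Matrix (Fin n) (Fin n) ℝ)
    (h : ∀ i j, 0 ≤ A i j) {k : ℕ} {i j : Fin n}
    (hp : 0 < (A ^ (k+1)) i j) : ∃ w, 0 < (A ^ k) i w ∧ 0 < A w j := by
  by_contra hc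
  push_neg at hc
  have hz : (A ^ (k+1)) i j = 0 := by
    rw [pow_succ, Matrix.mul_apply]
    apply Finset.sum_eq_zero
    intro w _
    rcases lt_or_eq_of_le (pow_entry_nonneg A h k i w) with hw | hw
    · have h3 : A w j = 0 := le_antisymm (hc w hw) (h w j)
      rw [h3, mul_zero]
    · rw [← hw, zero_mul]
  linarith

/-- For `A ∈ PSC_n^{0,1}` with `n ≥ 4`, let `h₀` be the least (0-based) index
of a nonzero last-row entry (among the first `n-1` columns), let `V₁^h` be the
set of indices `≥ h₀` (among the first `n-1` columns) with zero last-row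
entry, and let `t = max h₀ ⌊(m(V₁^h)+1)/2⌋`. Then `exp(A) = 2(t+1)`. -/
theorem exp_PSC_zero_one {n : ℕ} (hn : 4 ≤ n)
    (C A : Matrix (Fin n) (Fin n) ℝ) (hC : IsCompanion C)
    (h1 : C ⟨n - 1, by omega⟩ ⟨0, by omega⟩ = 0)
    (h2 : C ⟨n - 1, by omega⟩ ⟨n - 1, by omega⟩ = 1)
    (hA : A = C + C.transpose) (hprim : IsPrimitive A) (h₀ : ℕ)
    (hh : IsLeast {i : ℕ | ∃ h : i < n, i + 1 < n ∧
      A ⟨n - 1, by omega⟩ ⟨i, h⟩ ≠ 0} h₀) :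
    ExpIs A (2 * (max h₀ ((mRun {i : ℕ | h₀ ≤ i ∧ ∃ h : i < n, i + 1 < n ∧
      A ⟨n - 1, by omega⟩ ⟨i, h⟩ = 0} + 1) / 2) + 1)) := by
  have hn1 : n - 1 < n := by omega
  have hA0 : ∀ i j, 0 ≤ A i j := hprim.1
  set fN : Fin n := ⟨n - 1, hn1⟩ with hfN
  -- basic entry facts
  have hC0 : ∀ i j, 0 ≤ C i j := by
    intro i j
    have h3 := hC i j
    split at h3
    · rw [h3]; split <;> norm_num
    · rcases h3 with h3 | h3 <;> rw [h3] <;> norm_num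
  have hCrow : ∀ i j : Fin n, (i : ℕ) + 1 < n →
      C i j = if (j : ℕ) = (i : ℕ) + 1 then 1 else 0 := by
    intro i j hij
    have h3 := hC i j
    rwa [if_pos hij] at h3
  have hAentry : ∀ i j, A i j = C i j + C j i := by
    intro i j; rw [hA]; rfl
  have hAsym : ∀ i j, A i j = A j i := by
    intro i j; rw [hAentry, hAentry]; ring
  have hApowsym : ∀ k (i j : Fin n), (A ^ k) i j = (A ^ k) j i := by
    have hs : A.transpose = A := by
      ext i j; rw [Matrix.transpose_apply]; exact hAsym j i
    intro k i j
    have h3 : (A ^ k).transpose = A ^ k := by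
      rw [Matrix.transpose_pow, hs]
    calc (A ^ k) i j = (A ^ k).transpose j i := rfl
    _ = (A ^ k) j i := by rw [h3]
  -- edges
  have epath : ∀ (a b : ℕ) (ha : a < n) (hb : b < n), b = a + 1 →
      0 < A ⟨a, ha⟩ ⟨b, hb⟩ := by
    intro a b ha hb hab
    rw [hAentry]
    have h3 : C ⟨a, ha⟩ ⟨b, hb⟩ = 1 := by
      rw [hCrow ⟨a, ha⟩ ⟨b, hb⟩ (by simp only [] ; omega)]
      simp [hab]
    rw [h3]
    have := hC0 ⟨b, hb⟩ ⟨a, ha⟩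
    linarith
  have eloop : 0 < A fN fN := by
    rw [hAentry]
    have h3 : C fN fN = 1 := h2
    rw [h3]; norm_num
  -- the chord set
  set Sp : ℕ → Prop := fun i => ∃ h : i < n, i + 1 < n ∧ A ⟨n - 1, hn1⟩ ⟨i, h⟩ ≠ 0
    with hSp
  have echord : ∀ s (hs : Sp s), 0 < A fN ⟨s, hs.1⟩ := by
    intro s hs
    obtain ⟨hs1, hs2, hs3⟩ := hs
    exact lt_of_le_of_ne (hA0 _ _) (Ne.symm hs3)
  have Spn2 : Sp (n - 2) := by
    have hlt : n - 2 < n := by omega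
    refine ⟨hlt, by omega, ?_⟩
    have he : A ⟨n - 1, hn1⟩ ⟨n - 2, hlt⟩ = C ⟨n - 1, hn1⟩ ⟨n - 2, hlt⟩ + C ⟨n - 2, hlt⟩ ⟨n - 1, hn1⟩ :=
      hAentry _ _
    have hrow : C ⟨n - 2, hlt⟩ ⟨n - 1, hn1⟩ = 1 := by
      rw [hCrow ⟨n - 2, hlt⟩ ⟨n - 1, hn1⟩ (by simp only []; omega)]
      simp only []
      rw [if_pos (by omega)]
    have := hC0 ⟨n - 1, hn1⟩ ⟨n - 2, hlt⟩
    rw [he, hrow]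
    intro hcon
    linarith
  have hh1 : Sp h₀ := hh.1
  have hh2 : ∀ i, Sp i → h₀ ≤ i := fun i hi => hh.2 hi
  have h0le : h₀ ≤ n - 2 := hh2 _ Spn2
  have h0pos : 1 ≤ h₀ := by
    by_contra hcon
    push_neg at hcon
    interval_cases h₀
    obtain ⟨hlt, -, hne⟩ := hh1
    apply hne
    have he : A ⟨n - 1, hn1⟩ ⟨0, hlt⟩ = C ⟨n - 1, hn1⟩ ⟨0, hlt⟩ + C ⟨0, hlt⟩ ⟨n - 1, hn1⟩ :=
      hAentry _ _
    have hrow : C ⟨0, hlt⟩ ⟨n - 1, hn1⟩ = 0 := by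
      rw [hCrow ⟨0, hlt⟩ ⟨n - 1, hn1⟩ (by simp only []; omega)]
      simp only []
      rw [if_neg (by omega)]
    rw [he, hrow, h1]
    norm_num
  -- the zero set and m, t
  set Z : Set ℕ := {i : ℕ | h₀ ≤ i ∧ ∃ h : i < n, i + 1 < n ∧ A ⟨n - 1, hn1⟩ ⟨i, h⟩ = 0}
    with hZ
  set m : ℕ := mRun Z with hm
  set t : ℕ := max h₀ ((m + 1) / 2) with ht
  have run_le : ∀ (L a : ℕ), (∀ j, j < L → a + j ∈ Z) → L ≤ m := by
    intro L a hrun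
    apply le_csSup
    · refine ⟨n, ?_⟩
      rintro L' ⟨a', ha'⟩
      rcases Nat.eq_zero_or_pos L' with h | h
      · omega
      · have := ha' (L' - 1) (by omega)
        obtain ⟨-, hlt, hlt2, -⟩ := this
        omega
    · exact ⟨a, hrun⟩
  have run_exists : 0 < m → ∃ a, (∀ j, j < m → a + j ∈ Z) := by
    intro _
    have hmem : m ∈ {L : ℕ | ∃ a : ℕ, ∀ j, j < L → a + j ∈ Z} := by
      rw [hm]
      apply Nat.sSup_mem
      · exact ⟨0, 0, by omega⟩
      · refine ⟨n, ?_⟩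
        rintro L' ⟨a', ha'⟩
        rcases Nat.eq_zero_or_pos L' with h | h
        · omega
        · have := ha' (L' - 1) (by omega)
          obtain ⟨-, hlt, hlt2, -⟩ := this
          omega
    exact hmem
  have dich : ∀ i, h₀ ≤ i → i + 1 < n → Sp i ∨ i ∈ Z := by
    intro i hi hi2
    by_cases hz : A ⟨n - 1, hn1⟩ ⟨i, by omega⟩ = 0
    · exact Or.inr ⟨hi, by omega, hi2, hz⟩
    · exact Or.inl ⟨by omega, hi2, hz⟩
  have Znotin : ∀ i, i ∈ Z → ¬ Sp i := by
    intro i hiZ hiS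
    obtain ⟨hle, hw, hlt, hz⟩ := hiZ
    obtain ⟨h3, h4, h5⟩ := hiS
    exact h5 hz
  -- nat dist helper
  have hdist : ∀ a b : ℕ, Nat.dist a b = (a - b) + (b - a) := fun a b => rfl
  -- minimal distance to the chord set
  set md : ℕ → ℕ := fun u => sInf {d | ∃ s, Sp s ∧ Nat.dist u s = d} with hmd
  have md_le : ∀ u s, Sp s → md u ≤ Nat.dist u s := by
    intro u s hs
    exact Nat.sInf_le ⟨s, hs, rfl⟩
  have md_spec : ∀ u, ∃ s, Sp s ∧ Nat.dist u s = md u := by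
    intro u
    have hne : {d | ∃ s, Sp s ∧ Nat.dist u s = d}.Nonempty :=
      ⟨Nat.dist u h₀, h₀, hh1, rfl⟩
    exact Nat.sInf_mem hne
  -- KEY 1 : every vertex < n-1 is within t of a chord
  have md4 : ∀ u, u + 1 < n → md u ≤ t := by
    intro u hu
    by_cases hle : u ≤ h₀
    · have h3 := md_le u h₀ hh1
      rw [hdist] at h3
      omega
    · by_contra hcon
      push_neg at hcon
      have hfar : ∀ s, Sp s → t < Nat.dist u s := fun s hs =>
        lt_of_lt_of_le hcon (md_le u s hs)
      have h4 := hfar h₀ hh1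
      have h5 := hfar (n - 2) Spn2
      rw [hdist] at h4 h5
      have hrun : ∀ j, j < 2 * t + 1 → (u - t) + j ∈ Z := by
        intro j hj
        rcases dich (u - t + j) (by omega) (by omega) with hS | hZ
        · exfalso
          have := hfar _ hS
          rw [hdist] at this
          omega
        · exact hZ
      have := run_le (2 * t + 1) (u - t) hrun
      omega
  -- KEY 2 : a far vertex
  obtain ⟨v, hv1, hv2⟩ : ∃ v, v + 1 < n ∧ ∀ s, Sp s → t ≤ Nat.dist v s := by
    by_cases hcase : (m + 1) / 2 ≤ h₀
    · refine ⟨0, by omega, ?_⟩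
      intro s hs
      have := hh2 s hs
      rw [hdist]
      omega
    · push_neg at hcase
      have hm1 : 0 < m := by omega
      obtain ⟨a, ha⟩ := run_exists hm1
      have haZ0 : a + 0 ∈ Z := ha 0 (by omega)
      have haZlast : a + (m - 1) ∈ Z := ha (m - 1) (by omega)
      obtain ⟨ha0le, -, ha0lt, -⟩ := haZ0
      obtain ⟨halle, -, hallt, -⟩ := haZlast
      have hane : a ≠ h₀ := by
        intro hq
        exact Znotin a (by simpa using ha 0 (by omega)) (hq ▸ hh1)
      have hlast_ne : a + (m - 1) ≠ n - 2 := by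
        intro hq
        exact Znotin _ (ha (m - 1) (by omega)) (hq ▸ Spn2)
      refine ⟨a + (m + 1) / 2 - 1, by omega, ?_⟩
      intro s hs
      by_contra hcon
      push_neg at hcon
      rw [hdist] at hcon
      have hsZ : a + (s - a) ∈ Z := by
        apply ha
        omega
      have heq : a + (s - a) = s := by omega
      rw [heq] at hsZ
      exact Znotin s hsZ hs
  set vF : Fin n := ⟨v, by omega⟩ with hvF
  -- UPPER BOUND
  have QN : ∀ k, 0 < (A ^ k) fN fN := by
    intro k
    induction k with
    | zero => rw [pow_zero, Matrix.one_apply_eq]; norm_num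
    | succ k ih => exact pow_pos_step A hA0 ih eloop
  have Qstep : ∀ (x w : Fin n) (l : ℕ), 0 < A x w → (∀ k, l ≤ k → 0 < (A ^ k) w fN) →
      ∀ k, l + 1 ≤ k → 0 < (A ^ k) x fN := by
    intro x w l hxw hw k hk
    obtain ⟨k', rfl⟩ : ∃ k', k = k' + 1 := ⟨k - 1, by omega⟩
    exact pow_pos_step' A hA0 hxw (hw k' (by omega))
  have Qpath : ∀ (d u : ℕ) (hu : u < n) (s : ℕ), Sp s → Nat.dist u s = d →
      ∀ k, d + 1 ≤ k → 0 < (A ^ k) ⟨u, hu⟩ fN := by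
    intro d
    induction d with
    | zero =>
      intro u hu s hs hd k hk
      have hus : u = s := by rw [hdist] at hd; omega
      subst hus
      have hedge : 0 < A ⟨u, hu⟩ fN := by
        rw [hAsym]
        exact echord u hs
      exact Qstep ⟨u, hu⟩ fN 0 hedge (fun k' _ => QN k') k hk
    | succ d ih =>
      intro u hu s hs hd k hk
      have hsn : s + 1 < n := hs.2.1
      rcases lt_or_gt_of_ne (show u ≠ s by rw [hdist] at hd; omega) with hlt | hgt
      · have hu1 : u + 1 < n := by rw [hdist] at hd; omega
        have hedge : 0 < A ⟨u, hu⟩ ⟨u + 1, hu1⟩ := epath u (u + 1) hu hu1 rfl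
        have hrec := ih (u + 1) hu1 s hs (by rw [hdist] at hd ⊢; omega)
        exact Qstep _ _ (d + 1) hedge hrec k hk
      · have hu1 : u - 1 < n := by omega
        have hedge : 0 < A ⟨u, hu⟩ ⟨u - 1, hu1⟩ := by
          rw [hAsym]
          exact epath (u - 1) u hu1 hu (by omega)
        have hrec := ih (u - 1) hu1 s hs (by rw [hdist] at hd ⊢; omega)
        exact Qstep _ _ (d + 1) hedge hrec k hk
  have QAll : ∀ (u : Fin n) k, t + 1 ≤ k → 0 < (A ^ k) u fN := by
    intro u k hk
    by_cases hu : (u : ℕ) = n - 1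
    · have : u = fN := by
        apply Fin.ext
        exact hu
      rw [this]
      exact QN k
    · have hult : (u : ℕ) + 1 < n := by
        have := u.isLt
        omega
      obtain ⟨s, hs, hds⟩ := md_spec (u : ℕ)
      have hmd := md4 (u : ℕ) hult
      have h3 := Qpath (md (u : ℕ)) (u : ℕ) u.isLt s hs hds k (by omega)
      have : (⟨(u : ℕ), u.isLt⟩ : Fin n) = u := by
        apply Fin.ext
        rfl
      rwa [this] at h3
  have upper : ∀ i j, 0 < (A ^ (2 * (t + 1))) i j := by
    intro i j
    have he : 2 * (t + 1) = (t + 1) + (t + 1) := by omega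
    rw [he, pow_add, Matrix.mul_apply]
    refine Finset.sum_pos' (fun l _ => mul_nonneg (pow_entry_nonneg A hA0 _ i l)
      (pow_entry_nonneg A hA0 _ l j)) ⟨fN, Finset.mem_univ fN, ?_⟩
    have h3 := QAll i (t + 1) le_rfl
    have h4 := QAll j (t + 1) le_rfl
    rw [hApowsym] at h4
    exact mul_pos h3 h4
  -- LOWER BOUND
  set f : Fin n → ℕ := fun u => if (u : ℕ) = n - 1 then t + 1
    else min (Nat.dist v (u : ℕ)) (t + 1) with hf
  set g : Fin n → ℕ := fun u => if (u : ℕ) = n - 1 then 0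
    else min (1 + md (u : ℕ)) (t + 1) with hg
  have edge_char : ∀ w u : Fin n, 0 < A w u →
      (u : ℕ) = (w : ℕ) + 1 ∨ (w : ℕ) = (u : ℕ) + 1 ∨
      ((w : ℕ) = n - 1 ∧ (u : ℕ) = n - 1) ∨
      ((w : ℕ) = n - 1 ∧ Sp (u : ℕ)) ∨ ((u : ℕ) = n - 1 ∧ Sp (w : ℕ)) := by
    intro w u hwu
    have hent := hAentry w u
    have hCpos : 0 < C w u ∨ 0 < C u w := by
      by_contra hcp
      push_neg at hcp
      have e1 : C w u = 0 := le_antisymm hcp.1 (hC0 w u)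
      have e2 : C u w = 0 := le_antisymm hcp.2 (hC0 u w)
      rw [hent, e1, e2] at hwu
      linarith
    rcases hCpos with hP | hP
    · by_cases hw : (w : ℕ) + 1 < n
      · have := hCrow w u hw
        rw [this] at hP
        split at hP
        · left; assumption
        · linarith
      · have hwn : (w : ℕ) = n - 1 := by have := w.isLt; omega
        by_cases hun : (u : ℕ) = n - 1
        · exact Or.inr (Or.inr (Or.inl ⟨hwn, hun⟩))
        · have hu1 : (u : ℕ) + 1 < n := by have := u.isLt; omega
          refine Or.inr (Or.inr (Or.inr (Or.inl ⟨hwn, u.isLt, hu1, ?_⟩)))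
          have hwe : (⟨n - 1, hn1⟩ : Fin n) = w := Fin.ext (by simp [hwn])
          have hue : (⟨(u : ℕ), u.isLt⟩ : Fin n) = u := Fin.ext rfl
          rw [hwe, hue]
          exact ne_of_gt hwu
    · by_cases hu : (u : ℕ) + 1 < n
      · have := hCrow u w hu
        rw [this] at hP
        split at hP
        · right; left; assumption
        · linarith
      · have hun : (u : ℕ) = n - 1 := by have := u.isLt; omega
        by_cases hwn : (w : ℕ) = n - 1
        · exact Or.inr (Or.inr (Or.inl ⟨hwn, hun⟩))
        · have hw1 : (w : ℕ) + 1 < n := by have := w.isLt; omega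
          refine Or.inr (Or.inr (Or.inr (Or.inr ⟨hun, w.isLt, hw1, ?_⟩)))
          have hue : (⟨n - 1, hn1⟩ : Fin n) = u := Fin.ext (by simp [hun])
          have hwe : (⟨(w : ℕ), w.isLt⟩ : Fin n) = w := Fin.ext rfl
          rw [hue, hwe, ← hAsym w u]
          exact ne_of_gt hwu
  have fS : ∀ u : Fin n, Sp (u : ℕ) → t ≤ f u := by
    intro u hu
    have hun : (u : ℕ) ≠ n - 1 := by have := hu.2.1; omega
    have h3 := hv2 (u : ℕ) hu
    rw [hf]
    simp only [if_neg hun]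
    omega
  have gS : ∀ u : Fin n, Sp (u : ℕ) → g u ≤ 1 := by
    intro u hu
    have hun : (u : ℕ) ≠ n - 1 := by have := hu.2.1; omega
    have h3 : md (u : ℕ) ≤ Nat.dist (u : ℕ) (u : ℕ) := md_le _ _ hu
    rw [hdist] at h3
    rw [hg]
    simp only [if_neg hun]
    omega
  have mdlip : ∀ x : ℕ, md (x + 1) ≤ md x + 1 ∧ md x ≤ md (x + 1) + 1 := by
    intro x
    constructor
    · obtain ⟨s, hs, hds⟩ := md_spec x
      have h3 := md_le (x + 1) s hs
      rw [hdist] at h3 hds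
      omega
    · obtain ⟨s, hs, hds⟩ := md_spec (x + 1)
      have h3 := md_le x s hs
      rw [hdist] at h3 hds
      omega
  have fbd : ∀ u : Fin n, f u ≤ t + 1 := by
    intro u
    simp only [hf]
    split <;> omega
  have fpath : ∀ u u' : Fin n, (u' : ℕ) = (u : ℕ) + 1 →
      f u' ≤ f u + 1 ∧ f u ≤ f u' + 1 := by
    intro u u' hud
    have hu_ne : ¬ ((u : ℕ) = n - 1) := by have := u'.isLt; omega
    by_cases hun' : (u' : ℕ) = n - 1
    · have hSp : Sp (u : ℕ) := by
        have heq : (u : ℕ) = n - 2 := by omega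
        rw [heq]
        exact Spn2
      have h3 := hv2 _ hSp
      simp only [hf]
      rw [if_pos hun', if_neg hu_ne]
      omega
    · simp only [hf]
      rw [if_neg hun', if_neg hu_ne]
      rw [hud, hdist, hdist]
      omega
  have gpath : ∀ u u' : Fin n, (u' : ℕ) = (u : ℕ) + 1 →
      g u' ≤ g u + 1 ∧ g u ≤ g u' + 1 := by
    intro u u' hud
    have hu_ne : ¬ ((u : ℕ) = n - 1) := by have := u'.isLt; omega
    by_cases hun' : (u' : ℕ) = n - 1
    · have hSp : Sp (u : ℕ) := by
        have heq : (u : ℕ) = n - 2 := by omega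
        rw [heq]
        exact Spn2
      have h3 : md (u : ℕ) ≤ Nat.dist (u : ℕ) (u : ℕ) := md_le _ _ hSp
      rw [hdist] at h3
      simp only [hg]
      rw [if_pos hun', if_neg hu_ne]
      omega
    · have h4 := mdlip (u : ℕ)
      simp only [hg]
      rw [if_neg hun', if_neg hu_ne, hud]
      omega
  have hvFv : (vF : ℕ) = v := rfl
  have fvF : f vF = 0 := by
    simp only [hf]
    rw [if_neg (show ¬ v = n - 1 by omega), hdist]
    omega
  have gvF : t + 1 ≤ g vF := by
    have h3 : t ≤ md v := by
      obtain ⟨s, hs, hds⟩ := md_spec v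
      rw [← hds]
      exact hv2 s hs
    simp only [hg]
    rw [if_neg (show ¬ v = n - 1 by omega)]
    have h4 : md (vF : ℕ) = md v := rfl
    omega
  have inv : ∀ k (u : Fin n), 0 < (A ^ k) vF u →
      f u ≤ k ∧ ((k + (u : ℕ) + v) % 2 = 1 → t + 1 + g u ≤ k) := by
    intro k
    induction k with
    | zero =>
      intro u hu
      rw [pow_zero, Matrix.one_apply] at hu
      by_cases he : vF = u
      · rw [← he, hvFv, fvF]
        exact ⟨le_rfl, fun hp => by omega⟩
      · rw [if_neg he] at hu
        norm_num at hu
    | succ k ih =>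
      intro u hu
      obtain ⟨w, hw1, hw2⟩ := pow_pos_extract A hA0 hu
      obtain ⟨IH1, IH2⟩ := ih w hw1
      rcases edge_char w u hw2 with hcase | hcase | hcase | hcase | hcase
      · have hfp := (fpath w u hcase).1
        have hgp := (gpath w u hcase).1
        refine ⟨by omega, fun hp => ?_⟩
        have hp' : (k + (w : ℕ) + v) % 2 = 1 := by omega
        have := IH2 hp'
        omega
      · have hfp := (fpath u w hcase).2
        have hgp := (gpath u w hcase).2
        refine ⟨by omega, fun hp => ?_⟩
        have hp' : (k + (w : ℕ) + v) % 2 = 1 := by omega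
        have := IH2 hp'
        omega
      · have hfw : f w = t + 1 := by simp only [hf]; rw [if_pos hcase.1]
        have hfu : f u = t + 1 := by simp only [hf]; rw [if_pos hcase.2]
        have hgu : g u = 0 := by simp only [hg]; rw [if_pos hcase.2]
        exact ⟨by omega, fun hp => by omega⟩
      · have hfw : f w = t + 1 := by simp only [hf]; rw [if_pos hcase.1]
        have hfub := fbd u
        have hgu := gS u hcase.2
        exact ⟨by omega, fun hp => by omega⟩
      · have hfw := fS w hcase.2
        have hfu : f u = t + 1 := by simp only [hf]; rw [if_pos hcase.1]
        have hgu : g u = 0 := by simp only [hg]; rw [if_pos hcase.1]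
        exact ⟨by omega, fun hp => by omega⟩
  have hzero : ¬ (0 < (A ^ (2 * t + 1)) vF vF) := by
    intro hpos
    have h3 := (inv (2 * t + 1) vF hpos).2 (by rw [hvFv]; omega)
    omega
  -- monotonicity for least
  have mono : ∀ k, (∀ i j, 0 < (A ^ k) i j) → ∀ i j, 0 < (A ^ (k+1)) i j := by
    intro k hk i j
    by_cases hj : (j : ℕ) = n - 1
    · have hje : j = fN := Fin.ext (by rw [hj])
      exact pow_pos_step A hA0 (hk i fN) (by rw [hje]; exact eloop)
    · have hj1 : (j : ℕ) + 1 < n := by have := j.isLt; omega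
      have hedge : 0 < A ⟨(j : ℕ) + 1, hj1⟩ j := by
        have h3 := epath (j : ℕ) ((j : ℕ) + 1) j.isLt hj1 rfl
        rw [hAsym] at h3
        rwa [show (⟨(j : ℕ), j.isLt⟩ : Fin n) = j from Fin.ext rfl] at h3
      exact pow_pos_step A hA0 (hk i ⟨(j : ℕ) + 1, hj1⟩) hedge
  constructor
  · exact ⟨by omega, upper⟩
  · rintro k ⟨hk0, hkpos⟩
    by_contra hcon
    push_neg at hcon
    have hall : ∀ d, ∀ i j, 0 < (A ^ (k + d)) i j := by
      intro d
      induction d with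
      | zero => rw [Nat.add_zero]; exact hkpos
      | succ d ih =>
        have h5 := mono (k + d) ih
        have h6 : k + d + 1 = k + (d+1) := by omega
        rw [h6] at h5; exact h5
    have := hall (2 * t + 1 - k) vF vF
    have hk' : k + (2 * t + 1 - k) = 2 * t + 1 := by omega
    rw [hk'] at this
    exact hzero this
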